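/- Let n ∈ ℕ and let q : ℕ → ℍ, with discriminant polynomial p̃ = f₁·f̄₁ + f₂·f̄₂. If x ∈ ℍ is a zero of p(x) = ∑_{m=0}^{n} (q m)·x^m, then the complex number z = x.re + √(x.imI² + x.imJ² + x.imK²)·I is a root of p̃, i.e., p̃(z) = 0. -/

import Mathlib

noncomputable section

/-- The quaternion `a + b·i` corresponding to the complex number `z = a + b·I`. -/
def cq (z : ℂ) : Quaternion ℝ := ⟨z.re, z.im, 0, 0⟩

/-- The quaternion imaginary unit `k`. -/
def qk : Quaternion ℝ := ⟨0, 0, 0, 1⟩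

/-- Evaluation of the first derived polynomial `f₁(t) = ∑ t₁⁽ᵐ⁾ tᵐ`,
where `q m = t₁⁽ᵐ⁾ + t₂⁽ᵐ⁾·j` and `t₁⁽ᵐ⁾ = (q m).re + (q m).imI·I`. -/
def f1 (n : ℕ) (q : ℕ → Quaternion ℝ) (z : ℂ) : ℂ :=
  ∑ m ∈ Finset.range (n + 1), (⟨(q m).re, (q m).imI⟩ : ℂ) * z ^ m

/-- Evaluation of the second derived polynomial `f₂(t) = ∑ t₂⁽ᵐ⁾ tᵐ`,
where `t₂⁽ᵐ⁾ = (q m).imJ + (q m).imK·I`. -/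
def f2 (n : ℕ) (q : ℕ → Quaternion ℝ) (z : ℂ) : ℂ :=
  ∑ m ∈ Finset.range (n + 1), (⟨(q m).imJ, (q m).imK⟩ : ℂ) * z ^ m

/-- Evaluation of `f̄₁`, obtained from `f₁` by conjugating each coefficient. -/
def f1b (n : ℕ) (q : ℕ → Quaternion ℝ) (z : ℂ) : ℂ :=
  ∑ m ∈ Finset.range (n + 1), (starRingEnd ℂ) (⟨(q m).re, (q m).imI⟩ : ℂ) * z ^ m

/-- Evaluation of `f̄₂`, obtained from `f₂` by conjugating each coefficient. -/
def f2b (n : ℕ) (q : ℕ → Quaternion ℝ) (z : ℂ) : ℂ :=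
  ∑ m ∈ Finset.range (n + 1), (starRingEnd ℂ) (⟨(q m).imJ, (q m).imK⟩ : ℂ) * z ^ m

/-- Evaluation of the discriminant polynomial `p̃ = f₁·f̄₁ + f₂·f̄₂`. -/
def ptilde (n : ℕ) (q : ℕ → Quaternion ℝ) (z : ℂ) : ℂ :=
  f1 n q z * f1b n q z + f2 n q z * f2b n q z

open scoped Quaternion

namespace ZGDRaux

/-- first Cayley–Dickson component, as an additive hom. -/
def c1 : Quaternion ℝ →+ ℂ where
  toFun h := ⟨h.re, h.imI⟩
  map_zero' := by apply Complex.ext <;> simp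
  map_add' g h := by apply Complex.ext <;> simp

/-- second Cayley–Dickson component, as an additive hom. -/
def c2 : Quaternion ℝ →+ ℂ where
  toFun h := ⟨h.imJ, h.imK⟩
  map_zero' := by apply Complex.ext <;> simp
  map_add' g h := by apply Complex.ext <;> simp

lemma c1_mul (g h : Quaternion ℝ) :
    c1 (g * h) = c1 g * c1 h - c2 g * (starRingEnd ℂ) (c2 h) := by
  apply Complex.ext <;>
    simp [c1, c2, Quaternion.re_mul, Quaternion.imI_mul, Complex.mul_re, Complex.mul_im] <;> ring

lemma c2_mul (g h : Quaternion ℝ) :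
    c2 (g * h) = c1 g * c2 h + c2 g * (starRingEnd ℂ) (c1 h) := by
  apply Complex.ext <;>
    simp [c1, c2, Quaternion.imJ_mul, Quaternion.imK_mul, Complex.mul_re, Complex.mul_im] <;> ring

lemma c1_cq (w : ℂ) : c1 (cq w) = w := by apply Complex.ext <;> simp [c1, cq]

lemma c2_cq (w : ℂ) : c2 (cq w) = 0 := by apply Complex.ext <;> simp [c2, cq]

lemma cq_mul (z w : ℂ) : cq (z * w) = cq z * cq w := by
  ext
  · rw [Quaternion.re_mul]; simp [cq, Complex.mul_re, Complex.mul_im]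
  · rw [Quaternion.imI_mul]; simp [cq, Complex.mul_re, Complex.mul_im]
  · rw [Quaternion.imJ_mul]; simp [cq, Complex.mul_re, Complex.mul_im]
  · rw [Quaternion.imK_mul]; simp [cq, Complex.mul_re, Complex.mul_im]

lemma cq_one : cq 1 = 1 := by
  ext <;> simp [cq]

lemma cq_pow (z : ℂ) (m : ℕ) : cq (z ^ m) = cq z ^ m := by
  induction m with
  | zero => simpa using cq_one
  | succ m ih => rw [pow_succ, pow_succ, cq_mul, ih]

/-- every quaternion is conjugate to the standard complex representative. -/
lemma exists_conj (x : Quaternion ℝ) :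
    ∃ u : Quaternion ℝ, u ≠ 0 ∧
      x * u = u * cq ⟨x.re, Real.sqrt (x.imI ^ 2 + x.imJ ^ 2 + x.imK ^ 2)⟩ := by
  set s : ℝ := Real.sqrt (x.imI ^ 2 + x.imJ ^ 2 + x.imK ^ 2) with hs
  have hnn : 0 ≤ x.imI ^ 2 + x.imJ ^ 2 + x.imK ^ 2 := by positivity
  have hs2 : s ^ 2 = x.imI ^ 2 + x.imJ ^ 2 + x.imK ^ 2 := Real.sq_sqrt hnn
  by_cases hdeg : x.imI = -s ∧ x.imJ = 0 ∧ x.imK = 0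
  · refine ⟨⟨0, 0, 1, 0⟩, ?_, ?_⟩
    · intro h
      have := congrArg QuaternionAlgebra.imJ h
      simp at this
    · obtain ⟨h1, h2, h3⟩ := hdeg
      ext
      · erw [Quaternion.re_mul, Quaternion.re_mul]; simp [cq, h1, h2, h3]
      · erw [Quaternion.imI_mul, Quaternion.imI_mul]; simp [cq, h1, h2, h3]
      · erw [Quaternion.imJ_mul, Quaternion.imJ_mul]; simp [cq, h1, h2, h3]
      · erw [Quaternion.imK_mul, Quaternion.imK_mul]; simp [cq, h1, h2, h3]
  · refine ⟨⟨0, s + x.imI, x.imJ, x.imK⟩, ?_, ?_⟩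
    · intro h
      apply hdeg
      have h1 := congrArg QuaternionAlgebra.imI h
      have h2 := congrArg QuaternionAlgebra.imJ h
      have h3 := congrArg QuaternionAlgebra.imK h
      simp at h1 h2 h3
      exact ⟨by linarith, h2, h3⟩
    · ext
      · erw [Quaternion.re_mul, Quaternion.re_mul]; simp [cq]; nlinarith [hs2]
      · erw [Quaternion.imI_mul, Quaternion.imI_mul]; simp [cq]; nlinarith [hs2]
      · erw [Quaternion.imJ_mul, Quaternion.imJ_mul]; simp [cq]; nlinarith [hs2]
      · erw [Quaternion.imK_mul, Quaternion.imK_mul]; simp [cq]; nlinarith [hs2]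

end ZGDRaux

open ZGDRaux in
/-- If `x ∈ ℍ` is a zero of the simple quaternionic polynomial `p`, then the complex number
`z = x.re + √(x.imI² + x.imJ² + x.imK²)·I` is a root of the discriminant polynomial `p̃`. -/
theorem zero_gives_discriminant_root
    (n : ℕ) (q : ℕ → Quaternion ℝ) (x : Quaternion ℝ)
    (hx : ∑ m ∈ Finset.range (n + 1), q m * x ^ m = 0) :
    ptilde n q ⟨x.re, Real.sqrt (x.imI ^ 2 + x.imJ ^ 2 + x.imK ^ 2)⟩ = 0 := by
  obtain ⟨u, hu, hconj⟩ := exists_conj x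
  set z : ℂ := ⟨x.re, Real.sqrt (x.imI ^ 2 + x.imJ ^ 2 + x.imK ^ 2)⟩ with hz
  set a : ℂ := c1 u with ha
  set b : ℂ := c2 u with hb
  -- powers conjugate
  have hpow : ∀ m : ℕ, x ^ m * u = u * cq (z ^ m) := by
    intro m
    induction m with
    | zero => simp [cq_one]
    | succ m ih =>
      rw [pow_succ', pow_succ', cq_mul, mul_assoc, ih, ← mul_assoc, hconj, mul_assoc]
  have key : ∑ m ∈ Finset.range (n + 1), q m * u * cq (z ^ m) = 0 := by
    have : ∑ m ∈ Finset.range (n + 1), q m * u * cq (z ^ m)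
        = (∑ m ∈ Finset.range (n + 1), q m * x ^ m) * u := by
      rw [Finset.sum_mul]
      refine Finset.sum_congr rfl fun m _ => ?_
      rw [mul_assoc, ← hpow m, mul_assoc]
    rw [this, hx, zero_mul]
  -- the two complex equations
  have hterm1 : ∀ m : ℕ, c1 (q m * u * cq (z ^ m))
      = (c1 (q m) * a - c2 (q m) * (starRingEnd ℂ) b) * z ^ m := by
    intro m
    rw [c1_mul, c1_cq, c2_cq, map_zero, mul_zero, sub_zero, c1_mul]
  have hterm2 : ∀ m : ℕ, c2 (q m * u * cq (z ^ m))
      = (c1 (q m) * b + c2 (q m) * (starRingEnd ℂ) a) * (starRingEnd ℂ) (z ^ m) := by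
    intro m
    rw [c2_mul, c1_cq, c2_cq, mul_zero, zero_add, c2_mul]
  have hf1 : f1 n q z = ∑ m ∈ Finset.range (n + 1), c1 (q m) * z ^ m := rfl
  have hf2 : f2 n q z = ∑ m ∈ Finset.range (n + 1), c2 (q m) * z ^ m := rfl
  have hf1b : f1b n q z = ∑ m ∈ Finset.range (n + 1), (starRingEnd ℂ) (c1 (q m)) * z ^ m := rfl
  have hf2b : f2b n q z = ∑ m ∈ Finset.range (n + 1), (starRingEnd ℂ) (c2 (q m)) * z ^ m := rfl
  have e1 : a * f1 n q z - (starRingEnd ℂ) b * f2 n q z = 0 := by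
    have h0 := congrArg c1 key
    rw [map_sum, map_zero] at h0
    rw [hf1, hf2, Finset.mul_sum, Finset.mul_sum, ← Finset.sum_sub_distrib, ← h0]
    refine Finset.sum_congr rfl fun m _ => ?_
    rw [hterm1 m]; ring
  have e2 : (starRingEnd ℂ) b * f1b n q z + a * f2b n q z = 0 := by
    have h0 := congrArg c2 key
    rw [map_sum, map_zero] at h0
    have h1 := congrArg (starRingEnd ℂ) h0
    rw [map_sum, map_zero] at h1
    rw [hf1b, hf2b, Finset.mul_sum, Finset.mul_sum, ← Finset.sum_add_distrib, ← h1]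
    refine Finset.sum_congr rfl fun m _ => ?_
    rw [hterm2 m, map_mul]
    simp only [map_add, map_mul, RingHomCompTriple.comp_apply, Complex.conj_conj, map_pow,
      RingHom.id_apply]
    ring
  have hA : a * ptilde n q z = 0 := by
    rw [ptilde]; linear_combination f1b n q z * e1 + f2 n q z * e2
  have hB : (starRingEnd ℂ) b * ptilde n q z = 0 := by
    rw [ptilde]; linear_combination f1 n q z * e2 - f2b n q z * e1
  have hab : a ≠ 0 ∨ b ≠ 0 := by
    by_contra h
    push_neg at h
    apply hu
    have ha0 : (⟨u.re, u.imI⟩ : ℂ) = 0 := h.1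
    have hb0 : (⟨u.imJ, u.imK⟩ : ℂ) = 0 := h.2
    rw [Complex.ext_iff] at ha0 hb0
    simp only [Complex.zero_re, Complex.zero_im] at ha0 hb0
    ext <;> simp [ha0.1, ha0.2, hb0.1, hb0.2]
  rcases hab with h | h
  · exact (mul_eq_zero.mp hA).resolve_left h
  · exact (mul_eq_zero.mp hB).resolve_left fun hc => h (by simpa using congrArg (starRingEnd ℂ) hc)
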